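/- Let β > 0 and set A = Γ(β)/Γ(β+1/10). The function y : [0,∞) → ℝ defined by y(x) = (e^{20x^{9/10}/(9A)} − 1)/(e^{20x^{9/10}/(9A)} + 1) satisfies y(0) = 0 and, for every x > 0, solves the Riccati fractional differential equation in the GFD sense of order α = 9/10: A·x^(1/10)·y′(x) + y(x)^2 = 1. -/

import Mathlib

open Real

/-- `y(x) = (e^{20x^{9/10}/(9A)} − 1)/(e^{20x^{9/10}/(9A)} + 1)`, with
`A = Γ(β)/Γ(β+1/10)`, satisfies `y 0 = 0` and solves the Riccati fractional
differential equation in the GFD sense of order `9/10`: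
`A·x^(1/10)·y′(x) + y(x)² = 1` for all `x > 0`. -/
theorem gfd_riccati_nine_tenths (β : ℝ) (hβ : 0 < β) (A : ℝ)
    (hA : A = Real.Gamma β / Real.Gamma (β + 1 / 10)) (y : ℝ → ℝ)
    (hy : ∀ x : ℝ, y x =
      (Real.exp (20 * x ^ ((9 : ℝ) / 10) / (9 * A)) - 1) /
      (Real.exp (20 * x ^ ((9 : ℝ) / 10) / (9 * A)) + 1)) :
    y 0 = 0 ∧
    ∀ x : ℝ, 0 < x → A * x ^ ((1 : ℝ) / 10) * deriv y x + (y x) ^ 2 = 1 := by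
  have hA0 : 0 < A := by
    rw [hA]
    exact div_pos (Real.Gamma_pos_of_pos hβ) (Real.Gamma_pos_of_pos (by linarith))
  obtain ⟨c, hc⟩ : ∃ c : ℝ, c = 20 / (9 * A) := ⟨_, rfl⟩
  have hy' : y = fun x : ℝ =>
      (Real.exp (c * x ^ ((9 : ℝ) / 10)) - 1) /
      (Real.exp (c * x ^ ((9 : ℝ) / 10)) + 1) := by
    funext x
    rw [hy x, hc]
    ring_nf
  constructor
  · rw [hy 0, Real.zero_rpow (by norm_num)]
    simp
  · intro x hx
    have h1 : HasDerivAt (fun x : ℝ => x ^ ((9 : ℝ) / 10))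
        ((9 / 10) * x ^ ((9 : ℝ) / 10 - 1)) x :=
      Real.hasDerivAt_rpow_const (Or.inl hx.ne')
    have hu : HasDerivAt (fun x : ℝ => Real.exp (c * x ^ ((9 : ℝ) / 10)))
        (Real.exp (c * x ^ ((9 : ℝ) / 10)) * (c * ((9 / 10) * x ^ ((9 : ℝ) / 10 - 1)))) x :=
      (h1.const_mul c).exp
    obtain ⟨e, he⟩ : ∃ e : ℝ, e = Real.exp (c * x ^ ((9 : ℝ) / 10)) := ⟨_, rfl⟩
    rw [← he] at hu
    have hE : e + 1 ≠ 0 := by rw [he]; positivity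
    rw [he] at hu
    have hyd : HasDerivAt (fun x : ℝ => (Real.exp (c * x ^ ((9 : ℝ) / 10)) - 1) /
        (Real.exp (c * x ^ ((9 : ℝ) / 10)) + 1)) _ x := (hu.sub_const 1).div (hu.add_const 1)
      (by positivity : Real.exp (c * x ^ ((9 : ℝ) / 10)) + 1 ≠ 0)
    rw [← hy', ← he] at hyd
    rw [hyd.deriv, hy']
    simp only [← he]
    have hx1 : x ^ ((1 : ℝ) / 10) * x ^ ((9 : ℝ) / 10 - 1) = 1 := by
      rw [← Real.rpow_add hx]
      norm_num
    have hkey : A * x ^ ((1 : ℝ) / 10) * (c * ((9 / 10) * x ^ ((9 : ℝ) / 10 - 1))) = 2 := by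
      rw [hc]
      field_simp
      nlinarith [hx1]
    rw [show (9 : ℝ) / 10 - 1 = (9 - 10) / 10 by norm_num] at hkey ⊢
    field_simp
    linear_combination (20 * e) * hkey
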